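/- arXiv:1010.2321 — 3 statements merged into one kernel-verified Lean document; each statement's English description precedes it below -/
import Mathlib

section
/- A symplectic Dyck path for sp_{2n} starting at a simple root α_i and ending at α_j or α_{j,j̄} contains, for each fixed first index r, a (possibly empty) consecutive segment of roots α_{r,q}; consequently any symplectic Dyck path contains at most one root from any antichain of the form M^s in Lemma 3.1, i.e., the roots along a Dyck path are strictly increasing with respect to the order f_{n,n} > f_{n-1,n̄-1} > ... described in (2.8). -/
open scoped BigOperators TensorProduct

namespace SpPBW

/-- Coded positive roots of `C_n`: a pair `(i,c)` with `1 ≤ i ≤ c ≤ 2n - i`.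
For `c ≤ n` this codes the root `α_{i,c} = α_i + ⋯ + α_c`; for `c > n` it codes the
root `α_{i, (2n-c)-bar} = α_i + ⋯ + α_n + α_{n-1} + ⋯ + α_{2n-c}`. -/
def ValidPair (n : ℕ) (a : ℕ × ℕ) : Prop :=
  1 ≤ a.1 ∧ a.1 ≤ a.2 ∧ a.2 ≤ 2 * n - a.1

instance (n : ℕ) : DecidablePred (ValidPair n) := fun a =>
  decidable_of_iff (1 ≤ a.1 ∧ a.1 ≤ a.2 ∧ a.2 ≤ 2 * n - a.1) Iff.rfl

def validFinset (n : ℕ) : Finset (ℕ × ℕ) :=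
  (Finset.Icc 1 n ×ˢ Finset.Icc 1 (2 * n)).filter fun a => ValidPair n a

/-- The order (2.8) on positive roots: `rootLt a b` means `f_a < f_b`,
i.e. `f_b` is larger (rows from top to bottom, within a row from left to right). -/
def rootLt (a b : ℕ × ℕ) : Prop := a.1 < b.1 ∨ (a.1 = b.1 ∧ a.2 < b.2)

def DyckStep (a b : ℕ × ℕ) : Prop := b = (a.1, a.2 + 1) ∨ b = (a.1 + 1, a.2)

/-- A symplectic Dyck path (Definition 1.2). -/
def IsDyck (n : ℕ) (p : List (ℕ × ℕ)) : Prop :=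
  p ≠ [] ∧ (∀ a ∈ p, ValidPair n a) ∧ (∃ i, p.head? = some (i, i)) ∧
  p.Chain' DyckStep ∧ (∃ j, p.getLast? = some (j, j) ∨ p.getLast? = some (j, 2 * n - j))

/-- The bound `m_i + ⋯ + m_j` (resp. `m_i + ⋯ + m_n`) for a Dyck path starting at `α_i`
and ending at `α_j` (resp. at `α_{j,j-bar}`). -/
def pathBound (n : ℕ) (m : ℕ → ℕ) (p : List (ℕ × ℕ)) : ℕ :=
  match p.head?, p.getLast? with
  | some a, some b =>
      if b.1 = b.2 then ∑ l ∈ Finset.Icc a.1 b.2, m l else ∑ l ∈ Finset.Icc a.1 n, m l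
  | _, _ => 0

/-- `InS n m s` says that the multi-exponent `s` is a lattice point of the
polytope `P(λ)` for `λ = Σ m_i ω_i`, i.e. `s ∈ S(λ)`. -/
def InS (n : ℕ) (m : ℕ → ℕ) (s : ℕ × ℕ → ℕ) : Prop :=
  (∀ a, ¬ ValidPair n a → s a = 0) ∧
  ∀ p : List (ℕ × ℕ), IsDyck n p → (p.map s).sum ≤ pathBound n m p

/-- The coefficient vector of the fundamental weight `ω_i`. -/
def fundWt (i : ℕ) : ℕ → ℕ := fun l => if l = i then 1 else 0

/-- total degree of a multi-exponent -/
def deg (n : ℕ) (s : ℕ × ℕ → ℕ) : ℕ := ∑ a ∈ validFinset n, s a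

/-- `s_{i,•}`, the sum of the exponents in the `i`-th row -/
def rowDeg (n : ℕ) (s : ℕ × ℕ → ℕ) (i : ℕ) : ℕ :=
  ∑ a ∈ (validFinset n).filter (fun a => a.1 = i), s a

/-- `d(s) < d(t)` lexicographically, reading rows from the bottom (`i = n`) up. -/
def dLt (n : ℕ) (s t : ℕ × ℕ → ℕ) : Prop :=
  ∃ i, 1 ≤ i ∧ i ≤ n ∧ rowDeg n s i < rowDeg n t i ∧
    ∀ j, i < j → j ≤ n → rowDeg n s j = rowDeg n t j

def dEq (n : ℕ) (s t : ℕ × ℕ → ℕ) : Prop := ∀ i, rowDeg n s i = rowDeg n t i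

/-- `f^s > f^t` in the lexicographic order induced by the variable order (2.8). -/
def lexGt (n : ℕ) (s t : ℕ × ℕ → ℕ) : Prop :=
  ∃ a, ValidPair n a ∧ t a < s a ∧ ∀ b, ValidPair n b → rootLt a b → s b = t b

/-- `mOrd n s t` is the relation `f^s ◁ f^t` of Definition 2.7 (`f^s` "greater"). -/
def mOrd (n : ℕ) (s t : ℕ × ℕ → ℕ) : Prop :=
  deg n t < deg n s ∨ (deg n s = deg n t ∧ (dLt n s t ∨ (dEq n s t ∧ lexGt n s t)))

/-- multiplicity of the simple root `α_l` in the coded root `a` -/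
def coeffRoot (n : ℕ) (a : ℕ × ℕ) (l : ℕ) : ℕ :=
  (if a.1 ≤ l ∧ l ≤ a.2 ∧ l ≤ n then 1 else 0) +
  (if n < a.2 ∧ 2 * n - a.2 ≤ l ∧ l ≤ n - 1 then 1 else 0)

/-- the Cartan matrix of type `C_n` (indices `1,…,n`, `α_n` long):
`cartanC n i j = ⟨α_i, α_j^∨⟩` -/
def cartanC (n i j : ℕ) : ℤ :=
  if i = j then 2 else if i = n ∧ j + 1 = n then -2
  else if i + 1 = j ∨ j + 1 = i then -1 else 0

/-- `⟨α_a, α_i^∨⟩` for a coded positive root `a` -/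
def rootPairing (n : ℕ) (a : ℕ × ℕ) (i : ℕ) : ℤ :=
  ∑ l ∈ Finset.Icc 1 n, (coeffRoot n a l : ℤ) * cartanC n l i

/-- `R_i^s`: coded roots `β` in the support of `s` with `(ω_i, β) ≠ 0`. -/
def Ris (n i : ℕ) (s : ℕ × ℕ → ℕ) : Set (ℕ × ℕ) :=
  {a | ValidPair n a ∧ s a ≠ 0 ∧ a.1 ≤ i ∧ i ≤ a.2}

/-- the set of minimal elements of `R_i^s` with respect to the order (2.8) -/
def Mis (n i : ℕ) (s : ℕ × ℕ → ℕ) : Set (ℕ × ℕ) :=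
  {a | a ∈ Ris n i s ∧ ∀ b ∈ Ris n i s, ¬ rootLt b a}

-- the indicator multi-exponent `m_i^s` of `M_i^s`
open Classical in
noncomputable def mInd (n i : ℕ) (s : ℕ × ℕ → ℕ) : ℕ × ℕ → ℕ :=
  fun a => if a ∈ Mis n i s then 1 else 0


section Lie

variable {L V : Type*} [LieRing L] [LieAlgebra ℂ L]
variable [AddCommGroup V] [Module ℂ V] [LieRingModule L V] [LieModule ℂ L V]

/-- `applyList [x₁,…,x_l] w = x₁ ⋅ (x₂ ⋅ ( ⋯ (x_l ⋅ w)))` -/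
def applyList (xs : List L) (w : V) : V := xs.foldr (fun x u => ⁅x, u⁆) w

/-- the Chevalley–Serre relations for the Cartan matrix of type `C_n`, for
generators `h i, e i, f i`, `1 ≤ i ≤ n` -/
def SerreRels (n : ℕ) (h e f : ℕ → L) : Prop :=
  ∀ i ∈ Finset.Icc 1 n, ∀ j ∈ Finset.Icc 1 n,
    ⁅h i, h j⁆ = 0 ∧
    ⁅e i, f j⁆ = (if i = j then h i else 0) ∧
    ⁅h i, e j⁆ = (cartanC n j i : ℂ) • e j ∧
    ⁅h i, f j⁆ = (-(cartanC n j i) : ℂ) • f j ∧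
    (i ≠ j → ((LieAlgebra.ad ℂ L (e i)) ^ (1 - cartanC n j i).toNat) (e j) = 0 ∧
      ((LieAlgebra.ad ℂ L (f i)) ^ (1 - cartanC n j i).toNat) (f j) = 0)

/-- `L` is generated as a Lie algebra by the Chevalley generators; together with
`SerreRels` this pins `L` down as a quotient of `sp_{2n}`. -/
def Generates (n : ℕ) (h e f : ℕ → L) : Prop :=
  LieSubalgebra.lieSpan ℂ L {x | ∃ i, 1 ≤ i ∧ i ≤ n ∧ (x = h i ∨ x = e i ∨ x = f i)} = ⊤

/-- `F a` is a nonzero vector of `h`-weight `-α_a`, i.e. a root vector `f_{α_a} ∈ n⁻`. -/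
def RootVectors (n : ℕ) (h : ℕ → L) (F : ℕ × ℕ → L) : Prop :=
  ∀ a, ValidPair n a → F a ≠ 0 ∧
    ∀ i ∈ Finset.Icc 1 n, ⁅h i, F a⁆ = (-(rootPairing n a i) : ℂ) • F a

/-- `v` is a highest weight vector of weight `λ = Σ m_i ω_i`. -/
def IsHWVector (n : ℕ) (h e : ℕ → L) (m : ℕ → ℕ) (v : V) : Prop :=
  v ≠ 0 ∧ (∀ i ∈ Finset.Icc 1 n, ⁅e i, v⁆ = 0) ∧
    ∀ i ∈ Finset.Icc 1 n, ⁅h i, v⁆ = (m i : ℂ) • v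

/-- the PBW filtration `V(λ)_d = U(n⁻)_d v_λ` (with `n⁻` spanned by the `F a`) -/
def filt (n : ℕ) (F : ℕ × ℕ → L) (v : V) (d : ℕ) : Submodule ℂ V :=
  Submodule.span ℂ {w | ∃ xs : List (ℕ × ℕ), xs.length ≤ d ∧
    (∀ a ∈ xs, ValidPair n a) ∧ w = applyList (xs.map F) v}

/-- the step below degree `d` of the PBW filtration (so `⊥` for `d = 0`) -/
def lowFilt (n : ℕ) (F : ℕ × ℕ → L) (v : V) (d : ℕ) : Submodule ℂ V :=
  if d = 0 then ⊥ else filt n F v (d - 1)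

/-- the PBW filtration `U(n⁻)_d v` for a subalgebra `n⁻` -/
def filtSub (nminus : LieSubalgebra ℂ L) (v : V) (d : ℕ) : Submodule ℂ V :=
  Submodule.span ℂ {w | ∃ xs : List L, xs.length ≤ d ∧ (∀ x ∈ xs, x ∈ nminus) ∧
    w = applyList xs v}

/-- a fixed enumeration of the coded positive roots -/
def pairList (n : ℕ) : List (ℕ × ℕ) :=
  ((List.range (n + 1)).flatMap fun i => (List.range (2 * n + 1)).map fun c => (i, c)).filter
    fun a => decide (ValidPair n a)

/-- a canonical list realizing a multi-exponent `s` -/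
def canonList (n : ℕ) (s : ℕ × ℕ → ℕ) : List (ℕ × ℕ) :=
  (pairList n).flatMap fun a => List.replicate (s a) a

/-- the vector `f^s v` (computed in some fixed order of the factors) -/
def actMon (n : ℕ) (F : ℕ × ℕ → L) (v : V) (s : ℕ × ℕ → ℕ) : V :=
  applyList ((canonList n s).map F) v

/-- the index type of the variables of `S(n⁻) = ℂ[f_α : α > 0]` -/
abbrev RootIdx (n : ℕ) := {a : ℕ × ℕ // ValidPair n a}

/-- extend a multi-exponent on the valid pairs by zero -/
def extendExp (n : ℕ) (t : RootIdx n →₀ ℕ) : ℕ × ℕ → ℕ :=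
  fun a => if h : ValidPair n a then t ⟨a, h⟩ else 0

/-- the action of a polynomial `p ∈ S(n⁻)` on `v` (monomial by monomial, each
monomial acting by the corresponding product of root vectors) -/
noncomputable def actPoly (n : ℕ) (F : ℕ × ℕ → L) (v : V) (p : MvPolynomial (RootIdx n) ℂ) : V :=
  ∑ t ∈ p.support, MvPolynomial.coeff t p • actMon n F v (extendExp n t)

/-- `rootSub n a b = some c` when `α_a - α_b` is the positive root `α_c` -/
def rootSub (n : ℕ) (a b : ℕ × ℕ) : Option (ℕ × ℕ) :=
  (pairList n).find? fun c =>
    (List.range (n + 1)).all fun l => coeffRoot n c l + coeffRoot n b l == coeffRoot n a l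

/-- the operator `∂_{α_b}` on `S(n⁻)`: the derivation with `∂_{α_b} f_{α_a} = f_{α_a - α_b}`
if `α_a - α_b` is a positive root and `0` otherwise -/
noncomputable def pd (n : ℕ) (b : ℕ × ℕ) :
    Derivation ℂ (MvPolynomial (RootIdx n) ℂ) (MvPolynomial (RootIdx n) ℂ) :=
  MvPolynomial.mkDerivation ℂ fun a =>
    match rootSub n a.1 b with
    | some c => if h : ValidPair n c then MvPolynomial.X ⟨c, h⟩ else 0
    | none => 0

/-- the generators `f_{α_{i,j}}^{m_i+⋯+m_j+1}` (`1 ≤ i ≤ j ≤ n-1`) and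
`f_{α_{i,ī}}^{m_i+⋯+m_n+1}` (`1 ≤ i ≤ n`) of the space `R` -/
def genSet (n : ℕ) (m : ℕ → ℕ) : Set (MvPolynomial (RootIdx n) ℂ) :=
  {p | (∃ (a : RootIdx n) (i j : ℕ), 1 ≤ i ∧ i ≤ j ∧ j ≤ n - 1 ∧ a.val = (i, j) ∧
          p = MvPolynomial.X a ^ ((∑ l ∈ Finset.Icc i j, m l) + 1)) ∨
       (∃ (a : RootIdx n) (i : ℕ), 1 ≤ i ∧ i ≤ n ∧ a.val = (i, 2 * n - i) ∧
          p = MvPolynomial.X a ^ ((∑ l ∈ Finset.Icc i n, m l) + 1))}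

/-- the set `U(n⁺) ∘ R`: all results of applying words in the operators `∂_α` to
elements of `R` -/
def opGenSet (n : ℕ) (m : ℕ → ℕ) : Set (MvPolynomial (RootIdx n) ℂ) :=
  {p | ∃ (ds : List (ℕ × ℕ)) (r : MvPolynomial (RootIdx n) ℂ), r ∈ genSet n m ∧
    (∀ b ∈ ds, ValidPair n b) ∧ p = ds.foldr (fun b q => pd n b q) r}

/-- the ideal `I(λ) = S(n⁻)·(U(n⁺) ∘ R)` -/
noncomputable def idealI (n : ℕ) (m : ℕ → ℕ) : Ideal (MvPolynomial (RootIdx n) ℂ) :=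
  Ideal.span (opGenSet n m)

end Lie

end SpPBW

namespace SpPBW

instance : IsTrans (ℕ × ℕ) rootLt :=
  ⟨fun a b c hab hbc => by unfold rootLt at *; omega⟩

lemma filter_len_le_sum (s : ℕ × ℕ → ℕ) :
    ∀ l : List (ℕ × ℕ), (l.filter fun a => decide (s a ≠ 0)).length ≤ (l.map s).sum := by
  intro l
  induction l with
  | nil => simp
  | cons a t ih =>
    by_cases h : s a = 0
    · simpa [List.filter_cons, h] using ih
    · have h1 : 1 ≤ s a := Nat.one_le_iff_ne_zero.mpr h
      simp only [List.filter_cons, if_pos (by simpa using h : decide (s a ≠ 0) = true),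
        List.length_cons, List.map_cons, List.sum_cons]
      omega

lemma sum_fundWt_le (i a b : ℕ) : ∑ l ∈ Finset.Icc a b, fundWt i l ≤ 1 := by
  simp only [fundWt, Finset.sum_ite_eq']
  split <;> simp

/-- The roots along a symplectic Dyck path are strictly increasing with respect to
the order (2.8); consequently a Dyck path contains at most one element of the
support of any `s ∈ S(ω_i)` (the sets `M^s` of Lemma 3.1). -/
theorem stmt5 (n : ℕ) (p : List (ℕ × ℕ)) (hp : IsDyck n p) :
    p.Pairwise rootLt ∧
    ∀ i s, InS n (fundWt i) s → (p.filter fun a => decide (s a ≠ 0)).length ≤ 1 := by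
  obtain ⟨hne, hvalid, hhead, hchain, hlast⟩ := hp
  constructor
  · have h2 : p.Chain' rootLt :=
      hchain.imp (fun {a b} hab => by
        rcases hab with h | h <;> subst h <;> simp [rootLt])
    exact List.isChain_iff_pairwise.mp h2
  · intro i s hs
    have hb := hs.2 p ⟨hne, hvalid, hhead, hchain, hlast⟩
    have h1 := filter_len_le_sum s p
    have h2 : pathBound n (fundWt i) p ≤ 1 := by
      obtain ⟨i0, hh⟩ := hhead
      obtain ⟨j0, hl | hl⟩ := hlast <;>
        · simp only [pathBound, hh, hl]
          split <;> exact sum_fundWt_le _ _ _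
    omega


end SpPBW
end

section
/- For every fundamental weight ω_i of sp_{2n}, the number of integer points of the polytope P(ω_i) equals the dimension of the irreducible sp_{2n}-module V(ω_i), namely #S(ω_i) = C(2n,i) − C(2n,i−2). -/
open scoped BigOperators TensorProduct

namespace SpPBW

/-! ### Auxiliary development for `stmt8` -/

section Stmt8Aux

/-- componentwise-with-strict-sum order generated by Dyck steps -/
private def Rrel (a b : ℕ × ℕ) : Prop :=
  a.1 ≤ b.1 ∧ a.2 ≤ b.2 ∧ a.1 + a.2 < b.1 + b.2

private lemma rrel_trans {a b c : ℕ × ℕ} (h1 : Rrel a b) (h2 : Rrel b c) : Rrel a c :=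
  ⟨h1.1.trans h2.1, h1.2.1.trans h2.2.1, h1.2.2.trans h2.2.2⟩

private instance : IsTrans (ℕ × ℕ) Rrel := ⟨fun _ _ _ => rrel_trans⟩

private lemma dyckStep_rrel {a b : ℕ × ℕ} (h : DyckStep a b) : Rrel a b := by
  rcases h with h | h <;> subst h
  · exact ⟨le_rfl, Nat.le_succ _, by omega⟩
  · exact ⟨Nat.le_succ _, le_rfl, by omega⟩

private lemma pairwise_rrel {p : List (ℕ × ℕ)} (h : p.Chain' DyckStep) : p.Pairwise Rrel :=
  List.isChain_iff_pairwise.mp (List.IsChain.imp (fun _ _ => dyckStep_rrel) h)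

private lemma nodup_of_chain {p : List (ℕ × ℕ)} (h : p.Chain' DyckStep) : p.Nodup :=
  (pairwise_rrel h).imp (fun hr heq => by subst heq; exact absurd hr.2.2 (lt_irrefl _))

private lemma rel_head {p : List (ℕ × ℕ)} (h : p.Pairwise Rrel) {a x : ℕ × ℕ}
    (ha : p.head? = some a) (hx : x ∈ p) : x = a ∨ Rrel a x := by
  cases p with
  | nil => simp at hx
  | cons b t =>
    obtain rfl : b = a := by simpa using ha
    rcases List.mem_cons.mp hx with rfl | hx
    · exact Or.inl rfl
    · exact Or.inr ((List.pairwise_cons.mp h).1 x hx)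

private lemma rel_last {p : List (ℕ × ℕ)} (h : p.Pairwise Rrel) {b x : ℕ × ℕ}
    (hb : p.getLast? = some b) (hx : x ∈ p) : x = b ∨ Rrel x b := by
  have hne : p ≠ [] := by rintro rfl; simp at hb
  have hL : p.getLast hne = b := by
    rw [List.getLast?_eq_getLast hne] at hb
    exact Option.some.inj hb
  have hsplit := List.dropLast_append_getLast hne
  rw [hL] at hsplit
  rw [← hsplit] at hx h
  rcases List.mem_append.mp hx with hx | hx
  · exact Or.inr ((List.pairwise_append.mp h).2.2 x hx b (by simp))
  · simp at hx; exact Or.inl hx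

private lemma single_le_sum {α : Type*} (s : α → ℕ) {l : List α} {x : α} (hx : x ∈ l) :
    s x ≤ (l.map s).sum := by
  induction l with
  | nil => simp at hx
  | cons a t ih =>
    rcases List.mem_cons.mp hx with rfl | hx
    · simp
    · simp only [List.map_cons, List.sum_cons]
      exact (ih hx).trans (Nat.le_add_left _ _)

private lemma two_le_sum {α : Type*} (s : α → ℕ) : ∀ {l : List α}, l.Nodup →
    ∀ {x y : α}, x ∈ l → y ∈ l → x ≠ y → s x + s y ≤ (l.map s).sum := by
  intro l
  induction l with
  | nil => intro _ x y hx; simp at hx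
  | cons a t ih =>
    intro hnd x y hx hy hxy
    simp only [List.map_cons, List.sum_cons]
    rcases List.mem_cons.mp hx with hxa | hx
    · have hy' : y ∈ t := by
        rcases List.mem_cons.mp hy with h | h
        · exact absurd (hxa.trans h.symm) hxy
        · exact h
      have h2 := single_le_sum s hy'
      rw [hxa]; omega
    · rcases List.mem_cons.mp hy with hya | hy'
      · have h2 := single_le_sum s hx
        rw [hya]; omega
      · have h2 := ih (List.Nodup.of_cons hnd) hx hy' hxy
        omega

private lemma sum_le_one {α : Type*} (s : α → ℕ) : ∀ {l : List α}, l.Nodup →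
    (∀ x ∈ l, s x ≤ 1) → (∀ x ∈ l, ∀ y ∈ l, s x ≠ 0 → s y ≠ 0 → x = y) →
    (l.map s).sum ≤ 1 := by
  intro l
  induction l with
  | nil => simp
  | cons a t ih =>
    intro hnd hb hu
    simp only [List.map_cons, List.sum_cons]
    by_cases ha : s a = 0
    · rw [ha]
      simpa using ih (List.Nodup.of_cons hnd)
        (fun x hx => hb x (List.mem_cons_of_mem _ hx))
        (fun x hx y hy => hu x (List.mem_cons_of_mem _ hx) y (List.mem_cons_of_mem _ hy))
    · have ht : ∀ x ∈ t, s x = 0 := by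
        intro x hx
        by_contra hxs
        have heq := hu a List.mem_cons_self x (List.mem_cons_of_mem _ hx) ha hxs
        exact (List.nodup_cons.mp hnd).1 (heq ▸ hx)
      have hz : (t.map s).sum = 0 := List.sum_eq_zero (by
        intro z hz
        rcases List.mem_map.mp hz with ⟨x, hx, rfl⟩
        exact ht x hx)
      have hba := hb a List.mem_cons_self
      omega

private lemma fundWt_sum (i c d : ℕ) :
    (∑ l ∈ Finset.Icc c d, fundWt i l) = if c ≤ i ∧ i ≤ d then 1 else 0 := by
  unfold fundWt
  rw [Finset.sum_ite_eq' (Finset.Icc c d) i (fun _ => 1)]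
  simp [Finset.mem_Icc]

private lemma pathBound_eq (n : ℕ) (mm : ℕ → ℕ) (p : List (ℕ × ℕ)) (a1 a2 b1 b2 : ℕ)
    (ha : p.head? = some (a1, a2)) (hb : p.getLast? = some (b1, b2)) :
    pathBound n mm p =
      if b1 = b2 then ∑ l ∈ Finset.Icc a1 b2, mm l else ∑ l ∈ Finset.Icc a1 n, mm l := by
  unfold pathBound
  rw [ha, hb]

/-! ### explicit Dyck paths -/

private def pathPt (n a1 b1 b2 m : ℕ) : ℕ × ℕ :=
  if m ≤ a1 + b2 then (a1, m - a1)
  else if b2 ≤ n then (m - b2, b2)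
  else if m ≤ b1 + b2 then (m - b2, b2)
  else (b1, m - b1)

private def dpath (n a1 b1 b2 : ℕ) : List (ℕ × ℕ) :=
  (List.range' (2 * a1) ((if b2 ≤ n then 2 * b2 else 2 * n) + 1 - 2 * a1)).map
    (pathPt n a1 b1 b2)

private lemma head?_range'_map {α : Type*} (f : ℕ → α) (c k : ℕ) (hk : k ≠ 0) :
    ((List.range' c k).map f).head? = some (f c) := by
  cases k with
  | zero => exact absurd rfl hk
  | succ k => simp [List.range'_succ]

private lemma getLast?_range'_map {α : Type*} (f : ℕ → α) (c k : ℕ) (hk : k ≠ 0) :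
    ((List.range' c k).map f).getLast? = some (f (c + k - 1)) := by
  cases k with
  | zero => exact absurd rfl hk
  | succ k =>
    rw [List.range'_concat, List.map_append, List.map_singleton, List.getLast?_concat]
    have h2 : c + 1 * k = c + (k + 1) - 1 := by omega
    rw [h2]

private lemma chain'_range'_map {α : Type*} (Rr : α → α → Prop) (f : ℕ → α) :
    ∀ (k c : ℕ), (∀ m, c ≤ m → m + 1 < c + k → Rr (f m) (f (m + 1))) →
    List.Chain' Rr ((List.range' c k).map f) := by
  intro k
  induction k with
  | zero => intro c _; simp [List.Chain']
  | succ k ih =>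
    intro c h
    rw [List.range'_succ, List.map_cons]; show List.IsChain _ _; rw [List.isChain_cons]
    constructor
    · intro b hb
      cases k with
      | zero => simp at hb
      | succ k =>
        rw [head?_range'_map _ _ _ (by omega)] at hb
        obtain rfl := Option.some.inj hb
        exact h c le_rfl (by omega)
    · exact ih (c + 1) (fun m hm hm2 => h m (by omega) (by omega))

private lemma dpath_head (n a1 b1 b2 : ℕ) (h2 : a1 ≤ b1) (h3 : b1 ≤ b2)
    (h4 : b2 ≤ 2 * n - b1) :
    (dpath n a1 b1 b2).head? = some (a1, a1) := by
  unfold dpath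
  rw [head?_range'_map _ _ _ (by split_ifs <;> omega)]
  unfold pathPt
  rw [if_pos (by omega)]
  have : 2 * a1 - a1 = a1 := by omega
  rw [this]

private lemma dpath_last_le (n a1 b1 b2 : ℕ) (h2 : a1 ≤ b1) (h3 : b1 ≤ b2)
    (h4 : b2 ≤ 2 * n - b1) (hc : b2 ≤ n) :
    (dpath n a1 b1 b2).getLast? = some (b2, b2) := by
  unfold dpath
  rw [getLast?_range'_map _ _ _ (by split_ifs <;> omega)]
  have he : 2 * a1 + ((if b2 ≤ n then 2 * b2 else 2 * n) + 1 - 2 * a1) - 1 = 2 * b2 := by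
    rw [if_pos hc]; omega
  rw [he]
  unfold pathPt
  split_ifs <;> simp [Prod.ext_iff] <;> omega

private lemma dpath_last_gt (n a1 b1 b2 : ℕ) (h2 : a1 ≤ b1) (h3 : b1 ≤ b2)
    (h4 : b2 ≤ 2 * n - b1) (hc : ¬ b2 ≤ n) :
    (dpath n a1 b1 b2).getLast? = some (b1, 2 * n - b1) := by
  unfold dpath
  rw [getLast?_range'_map _ _ _ (by split_ifs <;> omega)]
  have he : 2 * a1 + ((if b2 ≤ n then 2 * b2 else 2 * n) + 1 - 2 * a1) - 1 = 2 * n := by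
    rw [if_neg hc]; omega
  rw [he]
  unfold pathPt
  split_ifs <;> simp [Prod.ext_iff] <;> omega

private lemma isDyck_dpath (n a1 b1 b2 : ℕ) (h1 : 1 ≤ a1) (h2 : a1 ≤ b1) (h3 : b1 ≤ b2)
    (h4 : b2 ≤ 2 * n - b1) : IsDyck n (dpath n a1 b1 b2) := by
  have hlen : (if b2 ≤ n then 2 * b2 else 2 * n) + 1 - 2 * a1 ≠ 0 := by split_ifs <;> omega
  refine ⟨?_, ?_, ⟨a1, dpath_head n a1 b1 b2 h2 h3 h4⟩, ?_, ?_⟩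
  · intro hcon
    apply hlen
    simpa [dpath] using congrArg List.length hcon
  · intro a hmem
    rcases List.mem_map.mp hmem with ⟨m, hm, rfl⟩
    rw [List.mem_range'_1] at hm
    unfold pathPt ValidPair
    split_ifs at hm ⊢ <;> simp <;> omega
  · unfold dpath
    apply chain'_range'_map
    intro m hm hm2
    unfold pathPt DyckStep
    split_ifs at hm2 ⊢ <;> simp [Prod.ext_iff] <;> omega
  · by_cases hc : b2 ≤ n
    · exact ⟨b2, Or.inl (dpath_last_le n a1 b1 b2 h2 h3 h4 hc)⟩
    · exact ⟨b1, Or.inr (by rw [dpath_last_gt n a1 b1 b2 h2 h3 h4 hc])⟩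

private lemma mem_dpath (n a1 b1 b2 a2 : ℕ) (h1 : 1 ≤ a1) (h2 : a1 ≤ b1) (h3 : b1 ≤ b2)
    (h4 : b2 ≤ 2 * n - b1) (ha : a1 ≤ a2) (hab : a2 ≤ b2) :
    (a1, a2) ∈ dpath n a1 b1 b2 := by
  unfold dpath
  refine List.mem_map.mpr ⟨a1 + a2, ?_, ?_⟩
  · rw [List.mem_range'_1]
    constructor
    · omega
    · split_ifs <;> omega
  · unfold pathPt
    rw [if_pos (by omega)]
    have : a1 + a2 - a1 = a2 := by omega
    rw [this]

private lemma memb_dpath (n a1 b1 b2 : ℕ) (h1 : 1 ≤ a1) (h2 : a1 ≤ b1) (h3 : b1 ≤ b2)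
    (h4 : b2 ≤ 2 * n - b1) :
    (b1, b2) ∈ dpath n a1 b1 b2 := by
  unfold dpath
  refine List.mem_map.mpr ⟨b1 + b2, ?_, ?_⟩
  · rw [List.mem_range'_1]
    constructor
    · omega
    · split_ifs <;> omega
  · unfold pathPt
    split_ifs <;> simp [Prod.ext_iff] <;> omega

private lemma pathBound_dpath (n i a1 b1 b2 : ℕ) (h1 : 1 ≤ a1) (h2 : a1 ≤ b1) (h3 : b1 ≤ b2)
    (h4 : b2 ≤ 2 * n - b1) (hin : i ≤ n) :
    pathBound n (fundWt i) (dpath n a1 b1 b2) = if a1 ≤ i ∧ i ≤ b2 then 1 else 0 := by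
  by_cases hc : b2 ≤ n
  · rw [pathBound_eq n _ _ a1 a1 b2 b2 (dpath_head n a1 b1 b2 h2 h3 h4)
      (dpath_last_le n a1 b1 b2 h2 h3 h4 hc), if_pos rfl, fundWt_sum]
  · rw [pathBound_eq n _ _ a1 a1 b1 (2 * n - b1) (dpath_head n a1 b1 b2 h2 h3 h4)
      (dpath_last_gt n a1 b1 b2 h2 h3 h4 hc)]
    split_ifs with hd <;> rw [fundWt_sum] <;> split_ifs <;> omega

/-! ### characterization of `InS` for a fundamental weight -/

private def Good (n i : ℕ) (s : ℕ × ℕ → ℕ) : Prop :=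
  (∀ x, s x ≠ 0 → ValidPair n x ∧ x.1 ≤ i ∧ i ≤ x.2 ∧ s x = 1) ∧
  (∀ x y, s x ≠ 0 → s y ≠ 0 → x.1 ≤ y.1 → x.2 ≤ y.2 → x = y)

private lemma inS_iff_good (n i : ℕ) (hi : 1 ≤ i) (hin : i ≤ n) (s : ℕ × ℕ → ℕ) :
    InS n (fundWt i) s ↔ Good n i s := by
  constructor
  · rintro ⟨hz, hp⟩
    have supp : ∀ x, s x ≠ 0 → ValidPair n x ∧ x.1 ≤ i ∧ i ≤ x.2 ∧ s x = 1 := by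
      intro x hx
      have hv : ValidPair n x := by
        by_contra hv; exact hx (hz x hv)
      obtain ⟨hx1, hx12, hx2⟩ := hv
      have hd := isDyck_dpath n x.1 x.1 x.2 hx1 le_rfl hx12 hx2
      have hmem : x ∈ dpath n x.1 x.1 x.2 := by
        have := mem_dpath n x.1 x.1 x.2 x.2 hx1 le_rfl hx12 hx2 hx12 le_rfl
        simpa using this
      have hb := hp _ hd
      rw [pathBound_dpath n i x.1 x.1 x.2 hx1 le_rfl hx12 hx2 hin] at hb
      have hle : s x ≤ if x.1 ≤ i ∧ i ≤ x.2 then 1 else 0 :=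
        le_trans (single_le_sum s hmem) hb
      refine ⟨⟨hx1, hx12, hx2⟩, ?_⟩
      revert hle
      split_ifs with h
      · intro h2; exact ⟨h.1, h.2, by omega⟩
      · intro h2; omega
    refine ⟨supp, ?_⟩
    intro x y hx hy hxy1 hxy2
    by_contra hne
    obtain ⟨⟨hx1, hx12, hx2⟩, hxi, hix, hsx⟩ := supp x hx
    obtain ⟨⟨hy1, hy12, hy2⟩, hyi, hiy, hsy⟩ := supp y hy
    have hd := isDyck_dpath n x.1 y.1 y.2 hx1 hxy1 hy12 hy2
    have hmx : x ∈ dpath n x.1 y.1 y.2 := by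
      have := mem_dpath n x.1 y.1 y.2 x.2 hx1 hxy1 hy12 hy2 hx12 hxy2
      simpa using this
    have hmy : y ∈ dpath n x.1 y.1 y.2 := by
      have := memb_dpath n x.1 y.1 y.2 hx1 hxy1 hy12 hy2
      simpa using this
    have hnd : (dpath n x.1 y.1 y.2).Nodup := nodup_of_chain hd.2.2.2.1
    have h2 := two_le_sum s hnd hmx hmy hne
    have hb := hp _ hd
    rw [pathBound_dpath n i x.1 y.1 y.2 hx1 hxy1 hy12 hy2 hin] at hb
    revert hb h2
    split_ifs <;> omega
  · rintro ⟨supp, anti⟩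
    refine ⟨fun a ha => by by_contra h; exact ha ((supp a h).1), ?_⟩
    intro p hd
    obtain ⟨hne, hval, ⟨c, hhead⟩, hchain, j, hlast⟩ := hd
    have hpw := pairwise_rrel hchain
    have hnd := nodup_of_chain hchain
    by_cases hex : ∃ x ∈ p, s x ≠ 0
    · obtain ⟨x, hxp, hxs⟩ := hex
      obtain ⟨hvx, hxi, hix, hsx⟩ := supp x hxs
      have huniq : ∀ z ∈ p, ∀ w ∈ p, s z ≠ 0 → s w ≠ 0 → z = w := by
        intro z hz w hw hzs hws
        by_cases hzw : z = w
        · exact hzw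
        · have hsym : Symmetric (fun a b : ℕ × ℕ => Rrel a b ∨ Rrel b a) :=
            fun a b h => h.symm
          have hpw2 : p.Pairwise (fun a b => Rrel a b ∨ Rrel b a) :=
            hpw.imp (fun h => Or.inl h)
          rcases (haveI : Std.Symm (fun a b : ℕ × ℕ => Rrel a b ∨ Rrel b a) := ⟨fun _ _ h => hsym h⟩; List.Pairwise.forall hpw2 hz hw hzw) with h | h
          · exact anti z w hzs hws h.1 h.2.1
          · exact (anti w z hws hzs h.1 h.2.1).symm
      have hsum : (p.map s).sum ≤ 1 := by
        apply sum_le_one s hnd _ huniq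
        intro z hz
        by_cases h : s z = 0
        · omega
        · exact (supp z h).2.2.2.le
      have hhx := rel_head hpw hhead hxp
      have hcx : c ≤ x.1 := by
        rcases hhx with heq | hr
        · rw [heq]
        · exact hr.1
      rcases hlast with hl | hl
      · have hxj := rel_last hpw hl hxp
        have hij : i ≤ j := by
          rcases hxj with heq | hr
          · have : x.2 = j := by rw [heq]
            omega
          · have := hr.2.1; omega
        rw [pathBound_eq n _ p c c j j hhead hl, if_pos rfl, fundWt_sum,
          if_pos ⟨le_trans hcx hxi, hij⟩]
        exact hsum
      · have hxj := rel_last hpw hl hxp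
        have hij : i ≤ 2 * n - j := by
          rcases hxj with heq | hr
          · have : x.2 = 2 * n - j := by rw [heq]
            omega
          · have := hr.2.1; omega
        rw [pathBound_eq n _ p c c j (2 * n - j) hhead hl]
        split_ifs with hjj
        · rw [fundWt_sum, if_pos ⟨le_trans hcx hxi, hij⟩]; exact hsum
        · rw [fundWt_sum, if_pos ⟨le_trans hcx hxi, hin⟩]; exact hsum
    · push_neg at hex
      have hz0 : (p.map s).sum = 0 := List.sum_eq_zero (by
        intro z hz
        rcases List.mem_map.mp hz with ⟨w, hw, rfl⟩
        exact hex w hw)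
      rw [hz0]
      exact Nat.zero_le _

/-! ### counting weakly decreasing bounded sequences -/

private def SeqFRow (i : ℕ) (prev : ℕ → Finset (List ℕ)) : ℕ → Finset (List ℕ)
  | 0 => ∅
  | (m + 1) =>
      if m + 1 < i + 1 then ∅
      else (prev (m + 1)).image (· ++ [0]) ∪ (SeqFRow i prev m).image (List.map (· + 1))

private def SeqF : ℕ → ℕ → Finset (List ℕ)
  | 0, _ => {[]}
  | (i + 1), m => SeqFRow i (SeqF i) m

private lemma SeqF_empty : ∀ {i m : ℕ}, m < i → SeqF i m = ∅ := by
  intro i m h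
  match i, m with
  | i + 1, 0 => rfl
  | i + 1, m + 1 =>
    show SeqFRow _ _ _ = ∅
    unfold SeqFRow
    rw [if_pos (by omega)]

private lemma SeqF_succ {i m : ℕ} (h : i + 1 ≤ m) :
    SeqF (i + 1) m =
      (SeqF i m).image (· ++ [0]) ∪ (SeqF (i + 1) (m - 1)).image (List.map (· + 1)) := by
  cases m with
  | zero => omega
  | succ m =>
    show SeqFRow _ _ _ = _
    unfold SeqFRow
    rw [if_neg (by omega)]
    rfl

private def SeqProp (i m : ℕ) (l : List ℕ) : Prop :=
  l.length = i ∧ (∀ k, k + 1 < i → l.getD (k + 1) 0 ≤ l.getD k 0) ∧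
    (∀ k, k < i → l.getD k 0 + k + 1 ≤ m)

private lemma getD_anti (l : List ℕ) (L : ℕ)
    (hdec : ∀ k, k + 1 < L → l.getD (k + 1) 0 ≤ l.getD k 0) :
    ∀ k k', k ≤ k' → k' < L → l.getD k' 0 ≤ l.getD k 0 := by
  intro k k'
  induction k' with
  | zero =>
    intro h _
    have hk : k = 0 := by omega
    rw [hk]
  | succ k' ihk =>
    intro hkk hk'
    rcases Nat.eq_or_lt_of_le hkk with heq | hlt
    · rw [heq]
    · exact (hdec k' hk').trans (ihk (by omega) (by omega))

private lemma mem_SeqF : ∀ (i m : ℕ) (l : List ℕ), l ∈ SeqF i m ↔ SeqProp i m l := by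
  intro i
  induction i with
  | zero =>
    intro m l
    constructor
    · intro h
      obtain rfl : l = [] := by simpa [SeqF] using h
      exact ⟨rfl, by omega, by omega⟩
    · rintro ⟨hlen, -, -⟩
      obtain rfl : l = [] := List.length_eq_zero_iff.mp hlen
      simp [SeqF]
  | succ i ih =>
    intro m
    induction m using Nat.strong_induction_on with
    | _ m ihm =>
      intro l
      by_cases hm : i + 1 ≤ m
      · rw [SeqF_succ hm]
        simp only [Finset.mem_union, Finset.mem_image]
        constructor
        · rintro (⟨l₁, hl₁, rfl⟩ | ⟨l₂, hl₂, rfl⟩)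
          · obtain ⟨hlen, hdec, hbd⟩ := (ih m l₁).mp hl₁
            refine ⟨by simp [hlen], ?_, ?_⟩
            · intro k hk
              by_cases hki : k + 1 < i
              · rw [List.getD_append _ _ _ _ (by omega), List.getD_append _ _ _ _ (by omega)]
                exact hdec k hki
              · rw [List.getD_append_right _ _ _ _ (by omega)]
                have h0 : (k + 1) - l₁.length = 0 := by omega
                rw [h0]
                exact Nat.zero_le _
            · intro k hk
              by_cases hki : k < i
              · rw [List.getD_append _ _ _ _ (by omega)]
                exact hbd k hki
              · rw [List.getD_append_right _ _ _ _ (by omega)]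
                have h0 : k - l₁.length = 0 := by omega
                rw [h0]
                have hki' : k = i := by omega
                simp [hki']
                omega
          · obtain ⟨hlen, hdec, hbd⟩ := (ihm (m - 1) (by omega) l₂).mp hl₂
            have hlen' : (l₂.map (· + 1)).length = i + 1 := by simpa using hlen
            have hget : ∀ k, k < i + 1 →
                (l₂.map (· + 1)).getD k 0 = l₂.getD k 0 + 1 := by
              intro k hk
              rw [List.getD_eq_getElem _ _ (by omega), List.getElem_map,
                List.getD_eq_getElem _ _ (by omega)]
            refine ⟨hlen', ?_, ?_⟩
            · intro k hk
              rw [hget _ (by omega), hget _ (by omega)]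
              exact Nat.succ_le_succ (hdec k hk)
            · intro k hk
              rw [hget _ hk]
              have := hbd k hk
              omega
        · rintro ⟨hlen, hdec, hbd⟩
          have hne : l ≠ [] := by
            intro h; rw [h] at hlen; simp at hlen
          have hmono := getD_anti l (i + 1) hdec
          have hxl : l.getLast hne = l.getD i 0 := by
            rw [List.getLast_eq_getElem, List.getD_eq_getElem _ _ (by omega)]
            congr 1
            omega
          rcases Nat.eq_zero_or_pos (l.getLast hne) with hx0 | hxpos
          · left
            have hgd : ∀ k, k < i → l.dropLast.getD k 0 = l.getD k 0 := by
              intro k hk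
              conv_rhs => rw [← List.dropLast_append_getLast hne]
              rw [List.getD_append _ _ _ _ (by simp [hlen]; omega)]
            refine ⟨l.dropLast, ?_, ?_⟩
            · rw [ih]
              refine ⟨by simp [hlen], ?_, ?_⟩
              · intro k hk
                rw [hgd _ (by omega), hgd _ (by omega)]
                exact hdec k (by omega)
              · intro k hk
                rw [hgd _ hk]
                exact hbd k (by omega)
            · rw [← hx0]
              exact List.dropLast_append_getLast hne
          · right
            have hge1 : ∀ k, k < i + 1 → 1 ≤ l.getD k 0 := by
              intro k hk
              have h1 := hmono k i (by omega) (by omega)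
              rw [← hxl] at h1
              omega
            have hget : ∀ k, k < i + 1 →
                (l.map (· - 1)).getD k 0 = l.getD k 0 - 1 := by
              intro k hk
              have hk1 : k < (l.map (· - 1)).length := by simp; omega
              rw [List.getD_eq_getElem _ _ hk1, List.getElem_map,
                List.getD_eq_getElem l 0 (show k < l.length by omega)]
            refine ⟨l.map (· - 1), ?_, ?_⟩
            · rw [ihm (m - 1) (by omega)]
              refine ⟨by simp [hlen], ?_, ?_⟩
              · intro k hk
                rw [hget _ (by omega), hget _ (by omega)]
                have := hdec k hk
                omega
              · intro k hk
                have h1 := hbd k hk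
                have h2 := hge1 k hk
                rw [hget _ hk]
                omega
            · rw [List.map_map]
              have : l.map ((· + 1) ∘ (· - 1)) = l.map id := by
                apply List.map_congr_left
                intro a ha
                obtain ⟨k, hk, rfl⟩ := List.mem_iff_getElem.mp ha
                have h2 := hge1 k (by omega)
                rw [List.getD_eq_getElem _ _ (by omega)] at h2
                simp only [Function.comp_apply, id_eq]
                omega
              rw [this, List.map_id]
      · rw [SeqF_empty (by omega)]
        simp only [Finset.notMem_empty, false_iff]
        rintro ⟨hlen, -, hbd⟩
        have := hbd i (by omega)
        omega

private lemma card_SeqF_succ {i m : ℕ} (h : i + 1 ≤ m) :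
    (SeqF (i + 1) m).card = (SeqF i m).card + (SeqF (i + 1) (m - 1)).card := by
  have hinj1 : Function.Injective (fun l : List ℕ => l ++ [0]) := by
    intro l₁ l₂ hh
    have := congrArg List.dropLast hh
    simpa using this
  have hinj2 : Function.Injective (List.map (· + 1 : ℕ → ℕ)) :=
    List.map_injective_iff.mpr (fun a b hab => by omega)
  have hdisj : Disjoint ((SeqF i m).image (· ++ [0]))
      ((SeqF (i + 1) (m - 1)).image (List.map (· + 1))) := by
    rw [Finset.disjoint_left]
    rintro l hl1 hl2
    obtain ⟨l₁, -, rfl⟩ := Finset.mem_image.mp hl1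
    obtain ⟨l₂, hl₂, heq⟩ := Finset.mem_image.mp hl2
    have hlen2 : l₂.length = i + 1 := ((mem_SeqF _ _ _).mp hl₂).1
    have hne : l₂ ≠ [] := by
      intro hh; rw [hh] at hlen2; simp at hlen2
    have h1 : (l₁ ++ [0]).getLast? = some 0 := List.getLast?_concat
    have h2 : (l₂.map (· + 1)).getLast? = some (l₂.getLast hne + 1) := by
      conv_lhs => rw [← List.dropLast_append_getLast hne]
      rw [List.map_append, List.map_singleton, List.getLast?_concat]
    rw [heq, h1] at h2
    simp at h2
  rw [SeqF_succ h, Finset.card_union_of_disjoint hdisj,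
    Finset.card_image_of_injective _ hinj1, Finset.card_image_of_injective _ hinj2]

private lemma card_SeqF_one : ∀ m, (SeqF 1 m).card = m := by
  intro m
  induction m using Nat.strong_induction_on with
  | _ m ihm =>
    match m with
    | 0 => rw [SeqF_empty (by omega)]; simp
    | (m + 1) =>
      rw [card_SeqF_succ (by omega)]
      have h0 : (SeqF 0 (m + 1)).card = 1 := by simp [SeqF]
      have h1 : (SeqF 1 (m + 1 - 1)).card = m := by
        rw [show m + 1 - 1 = m from rfl]
        exact ihm m (by omega)
      rw [h0, h1]
      omega

private lemma card_SeqF_two : ∀ m, 1 ≤ m → (SeqF 2 m).card + 1 = Nat.choose (m + 1) 2 := by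
  intro m
  induction m using Nat.strong_induction_on with
  | _ m ihm =>
    intro hm
    match m, hm with
    | 1, _ =>
      rw [SeqF_empty (by omega)]
      decide
    | (m + 2), _ =>
      have hrec : (SeqF 2 (m + 2)).card = (SeqF 1 (m + 2)).card + (SeqF 2 (m + 1)).card :=
        card_SeqF_succ (show 1 + 1 ≤ m + 2 by omega)
      have hone := card_SeqF_one (m + 2)
      have h2 : (SeqF 2 (m + 1)).card + 1 = Nat.choose (m + 2) 2 := by
        have := ihm (m + 1) (by omega) (by omega)
        rwa [show m + 1 + 1 = m + 2 from rfl] at this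
      have hp : Nat.choose (m + 2 + 1) 2 = Nat.choose (m + 2) 1 + Nat.choose (m + 2) 2 :=
        Nat.choose_succ_succ (m + 2) 1
      have hc1 : Nat.choose (m + 2) 1 = m + 2 := Nat.choose_one_right _
      omega

private lemma card_SeqF_main : ∀ i, 1 ≤ i → ∀ m, i + 1 ≤ m →
    (SeqF (i + 1) m).card + Nat.choose (m + i) (i - 1) = Nat.choose (m + i) (i + 1) := by
  intro i
  induction i with
  | zero => omega
  | succ i ihi =>
    intro _ m
    induction m using Nat.strong_induction_on with
    | _ m ihm =>
      intro hm
      rcases Nat.eq_zero_or_pos i with rfl | hipos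
      · -- i + 1 = 1 : use card_SeqF_two
        have := card_SeqF_two m (by omega)
        have hz : Nat.choose (m + 1) 0 = 1 := Nat.choose_zero_right _
        simpa [hz] using this
      · -- i ≥ 1
        have hrec : (SeqF (i + 2) m).card =
            (SeqF (i + 1) m).card + (SeqF (i + 2) (m - 1)).card :=
          card_SeqF_succ (show (i + 1) + 1 ≤ m by omega)
        have h1 := ihi hipos m (by omega)
        show (SeqF (i + 2) m).card + Nat.choose (m + i + 1) i = Nat.choose (m + i + 1) (i + 2)
        by_cases hm1 : i + 2 ≤ m - 1
        · have h2 : (SeqF (i + 2) (m - 1)).card + Nat.choose (m + i) i =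
              Nat.choose (m + i) (i + 2) := by
            have h := ihm (m - 1) (by omega) hm1
            rwa [show m - 1 + (i + 1) = m + i by omega] at h
          have hp1 : Nat.choose (m + i + 1) (i + 2) =
              Nat.choose (m + i) (i + 1) + Nat.choose (m + i) (i + 2) :=
            Nat.choose_succ_succ (m + i) (i + 1)
          have hp2 : Nat.choose (m + i + 1) i =
              Nat.choose (m + i) (i - 1) + Nat.choose (m + i) i := by
            have h := Nat.choose_succ_succ (m + i) (i - 1)
            rwa [show (i - 1).succ = i by omega] at h
          omega
        · have hm' : m = i + 2 := by omega
          subst hm'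
          have hemp : (SeqF (i + 2) (i + 2 - 1)).card = 0 := by
            rw [SeqF_empty (by omega)]; simp
          rw [hemp] at hrec
          rw [show i + 2 + i + 1 = 2 * i + 3 by omega]
          have h1' : (SeqF (i + 1) (i + 2)).card + Nat.choose (2 * i + 2) (i - 1) =
              Nat.choose (2 * i + 2) (i + 1) := by
            rwa [show i + 2 + i = 2 * i + 2 by omega] at h1
          have hp1 : Nat.choose (2 * i + 3) (i + 2) =
              Nat.choose (2 * i + 2) (i + 1) + Nat.choose (2 * i + 2) (i + 2) :=
            Nat.choose_succ_succ (2 * i + 2) (i + 1)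
          have hsymm : Nat.choose (2 * i + 2) (i + 2) = Nat.choose (2 * i + 2) i := by
            have h := Nat.choose_symm (show i + 2 ≤ 2 * i + 2 by omega)
            rw [show 2 * i + 2 - (i + 2) = i by omega] at h
            exact h.symm
          have hp2 : Nat.choose (2 * i + 3) i =
              Nat.choose (2 * i + 2) (i - 1) + Nat.choose (2 * i + 2) i := by
            have h := Nat.choose_succ_succ (2 * i + 2) (i - 1)
            rwa [show (i - 1).succ = i by omega] at h
          omega

/-! ### the bijection between `Good` multi-exponents and sequences -/

private def cOf (i : ℕ) (l : List ℕ) (a : ℕ) : ℕ := l.getD (a - 1) 0 + (i - 1)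

private def psi (i : ℕ) (l : List ℕ) : ℕ × ℕ → ℕ := fun x =>
  if 1 ≤ x.1 ∧ x.1 ≤ i ∧ i ≤ cOf i l x.1 ∧ x.2 = cOf i l x.1 ∧
      (x.1 = i ∨ cOf i l (x.1 + 1) < cOf i l x.1) then 1 else 0

private lemma psi_cond {i : ℕ} {l : List ℕ} {x : ℕ × ℕ} (h : psi i l x ≠ 0) :
    1 ≤ x.1 ∧ x.1 ≤ i ∧ i ≤ cOf i l x.1 ∧ x.2 = cOf i l x.1 ∧
      (x.1 = i ∨ cOf i l (x.1 + 1) < cOf i l x.1) := by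
  by_contra hc
  unfold psi at h
  rw [if_neg hc] at h
  exact h rfl

private lemma psi_eq_one {i : ℕ} {l : List ℕ} {x : ℕ × ℕ}
    (h : 1 ≤ x.1 ∧ x.1 ≤ i ∧ i ≤ cOf i l x.1 ∧ x.2 = cOf i l x.1 ∧
      (x.1 = i ∨ cOf i l (x.1 + 1) < cOf i l x.1)) : psi i l x = 1 := by
  unfold psi
  rw [if_pos h]

private def suppF (n : ℕ) (s : ℕ × ℕ → ℕ) (a : ℕ) : Finset (ℕ × ℕ) :=
  (Finset.Icc 1 n ×ˢ Finset.Icc 1 (2 * n)).filter fun x => a ≤ x.1 ∧ s x ≠ 0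

private def recC (n i : ℕ) (s : ℕ × ℕ → ℕ) (a : ℕ) : ℕ :=
  max (i - 1) ((suppF n s a).sup Prod.snd)

private lemma le_recC {n i : ℕ} {s : ℕ × ℕ → ℕ}
    (hs : ∀ x, s x ≠ 0 → ValidPair n x ∧ x.1 ≤ i ∧ i ≤ x.2) (hin : i ≤ n)
    {x : ℕ × ℕ} (hx : s x ≠ 0) {a : ℕ} (ha : a ≤ x.1) : x.2 ≤ recC n i s a := by
  obtain ⟨⟨h1, h2, h3⟩, h4, h5⟩ := hs x hx
  have hmem : x ∈ suppF n s a := by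
    rw [suppF, Finset.mem_filter, Finset.mem_product, Finset.mem_Icc, Finset.mem_Icc]
    exact ⟨⟨⟨h1, by omega⟩, ⟨by omega, by omega⟩⟩, ha, hx⟩
  exact le_trans (Finset.le_sup (f := Prod.snd) hmem) (le_max_right _ _)

private lemma recC_attained {n i : ℕ} {s : ℕ × ℕ → ℕ} (hi : 1 ≤ i) {a : ℕ}
    (h : i ≤ recC n i s a) : ∃ x, s x ≠ 0 ∧ a ≤ x.1 ∧ x.2 = recC n i s a := by
  have hsup : i ≤ (suppF n s a).sup Prod.snd := by
    by_contra hc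
    have : recC n i s a ≤ i - 1 := by
      apply max_le le_rfl
      omega
    omega
  have hne : (suppF n s a).Nonempty := by
    rw [Finset.nonempty_iff_ne_empty]
    intro hc
    rw [hc] at hsup
    simp at hsup
    omega
  obtain ⟨x, hxmem, hxeq⟩ := Finset.exists_mem_eq_sup _ hne Prod.snd
  rw [suppF, Finset.mem_filter] at hxmem
  refine ⟨x, hxmem.2.2, hxmem.2.1, ?_⟩
  rw [recC, ← hxeq]
  omega

private lemma recC_anti {n i : ℕ} {s : ℕ × ℕ → ℕ} {a a' : ℕ} (h : a ≤ a') :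
    recC n i s a' ≤ recC n i s a := by
  have hsub : suppF n s a' ⊆ suppF n s a := by
    rw [suppF, suppF]
    intro x hx
    rw [Finset.mem_filter] at hx ⊢
    exact ⟨hx.1, le_trans h hx.2.1, hx.2.2⟩
  exact max_le_max le_rfl (Finset.sup_mono hsub)

private lemma recC_le {n i : ℕ} {s : ℕ × ℕ → ℕ}
    (hs : ∀ x, s x ≠ 0 → ValidPair n x ∧ x.1 ≤ i ∧ i ≤ x.2) (hin : i ≤ n)
    {a : ℕ} (h1 : 1 ≤ a) (h2 : a ≤ i) : recC n i s a ≤ 2 * n - a := by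
  apply max_le (by omega)
  apply Finset.sup_le
  intro x hx
  rw [suppF, Finset.mem_filter] at hx
  obtain ⟨-, hax, hxs⟩ := hx
  obtain ⟨⟨hv1, hv2, hv3⟩, -, -⟩ := hs x hxs
  omega

private def phi (n i : ℕ) (s : ℕ × ℕ → ℕ) : List ℕ :=
  (List.range' 1 i).map fun a => recC n i s a - (i - 1)

private lemma phi_length (n i : ℕ) (s : ℕ × ℕ → ℕ) : (phi n i s).length = i := by
  simp [phi]

private lemma phi_getD (n i : ℕ) (s : ℕ × ℕ → ℕ) {k : ℕ} (hk : k < i) :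
    (phi n i s).getD k 0 = recC n i s (k + 1) - (i - 1) := by
  rw [List.getD_eq_getElem _ _ (by rw [phi_length]; exact hk)]
  unfold phi
  rw [List.getElem_map, List.getElem_range']
  rw [show 1 + 1 * k = k + 1 by omega]

private lemma phi_mem_SeqF (n i : ℕ) (hi : 1 ≤ i) (hin : i ≤ n) (s : ℕ × ℕ → ℕ)
    (hg : Good n i s) : phi n i s ∈ SeqF i (2 * n + 1 - i) := by
  have hs : ∀ x, s x ≠ 0 → ValidPair n x ∧ x.1 ≤ i ∧ i ≤ x.2 :=
    fun x hx => ⟨(hg.1 x hx).1, (hg.1 x hx).2.1, (hg.1 x hx).2.2.1⟩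
  rw [mem_SeqF]
  refine ⟨phi_length n i s, ?_, ?_⟩
  · intro k hk
    rw [phi_getD n i s (by omega), phi_getD n i s (by omega)]
    have h1 := recC_anti (n := n) (i := i) (s := s) (show k + 1 ≤ k + 1 + 1 by omega)
    omega
  · intro k hk
    rw [phi_getD n i s hk]
    have h4 := recC_le hs hin (show 1 ≤ k + 1 by omega) (show k + 1 ≤ i by omega)
    have h0 : i - 1 ≤ recC n i s (k + 1) := le_max_left _ _
    omega

private lemma cOf_phi (n i : ℕ) (s : ℕ × ℕ → ℕ) {a : ℕ} (h1 : 1 ≤ a) (h2 : a ≤ i) :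
    cOf i (phi n i s) a = recC n i s a := by
  unfold cOf
  rw [phi_getD n i s (show a - 1 < i by omega)]
  rw [show a - 1 + 1 = a by omega]
  have h0 : i - 1 ≤ recC n i s a := le_max_left _ _
  omega

private lemma psi_phi (n i : ℕ) (hi : 1 ≤ i) (hin : i ≤ n) (s : ℕ × ℕ → ℕ)
    (hg : Good n i s) : psi i (phi n i s) = s := by
  obtain ⟨hsupp, hanti⟩ := hg
  have hs : ∀ x, s x ≠ 0 → ValidPair n x ∧ x.1 ≤ i ∧ i ≤ x.2 :=
    fun x hx => ⟨(hsupp x hx).1, (hsupp x hx).2.1, (hsupp x hx).2.2.1⟩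
  funext x
  by_cases hx : s x = 0
  · rw [hx]
    by_contra hne
    have hcond := psi_cond hne
    obtain ⟨h1, h2, h3, h4, h5⟩ := hcond
    rw [cOf_phi n i s h1 h2] at h3 h4 h5
    obtain ⟨y, hys, hya, hy2⟩ := recC_attained hi h3
    rcases Nat.eq_or_lt_of_le hya with heq | hlt
    · -- y = x
      have : y = x := Prod.ext heq.symm (by omega)
      rw [this] at hys
      exact hys hx
    · have hyi : y.1 ≤ i := (hs y hys).2.1
      have hx1i : x.1 < i := by omega
      have h5' : recC n i s (x.1 + 1) < recC n i s x.1 := by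
        rcases h5 with h | h
        · omega
        · rwa [cOf_phi n i s (by omega) (by omega)] at h
      have := le_recC hs hin hys (show x.1 + 1 ≤ y.1 by omega)
      omega
  · obtain ⟨hv, hxi, hix, hs1⟩ := hsupp x hx
    have hrx : recC n i s x.1 = x.2 := by
      have hub : x.2 ≤ recC n i s x.1 := le_recC hs hin hx le_rfl
      have hirc : i ≤ recC n i s x.1 := le_trans hix hub
      obtain ⟨y, hys, hyx, hy2⟩ := recC_attained hi hirc
      have hxy : x = y := hanti x y hx hys hyx (by omega)
      have e2 : y.2 = x.2 := by rw [hxy]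
      omega
    have hcor : x.1 = i ∨ cOf i (phi n i s) (x.1 + 1) < cOf i (phi n i s) x.1 := by
      rcases Nat.eq_or_lt_of_le hxi with heq | hlt
      · exact Or.inl heq
      · right
        rw [cOf_phi n i s hv.1 hxi, cOf_phi n i s (by omega) (by omega), hrx]
        by_contra hc
        have hge : x.2 ≤ recC n i s (x.1 + 1) := by omega
        have hi2 : i ≤ recC n i s (x.1 + 1) := le_trans hix hge
        obtain ⟨y, hys, hyx, hy2⟩ := recC_attained hi hi2
        have hxy : x = y := hanti x y hx hys (by omega) (by omega)
        have e1 : x.1 = y.1 := by rw [hxy]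
        omega
    rw [psi_eq_one ⟨hv.1, hxi, ?_, ?_, hcor⟩, hs1]
    · rw [cOf_phi n i s hv.1 hxi, hrx]
      exact hix
    · rw [cOf_phi n i s hv.1 hxi, hrx]

private lemma cOf_anti (i : ℕ) (l : List ℕ) (hlen : l.length = i)
    (hdec : ∀ k, k + 1 < i → l.getD (k + 1) 0 ≤ l.getD k 0) :
    ∀ a a', 1 ≤ a → a ≤ a' → a' ≤ i → cOf i l a' ≤ cOf i l a := by
  intro a a' h1 h2 h3
  unfold cOf
  have := getD_anti l i hdec (a - 1) (a' - 1) (by omega) (by omega)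
  omega

private lemma good_psi (n i : ℕ) (hi : 1 ≤ i) (hin : i ≤ n) {l : List ℕ}
    (hl : l ∈ SeqF i (2 * n + 1 - i)) : Good n i (psi i l) := by
  obtain ⟨hlen, hdec, hbd⟩ := (mem_SeqF _ _ _).mp hl
  have hcb : ∀ a, 1 ≤ a → a ≤ i → cOf i l a ≤ 2 * n - a := by
    intro a h1 h2
    unfold cOf
    have := hbd (a - 1) (by omega)
    omega
  constructor
  · intro x hx
    have h := psi_cond hx
    obtain ⟨h1, h2, h3, h4, h5⟩ := h
    have hb := hcb x.1 h1 h2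
    refine ⟨⟨h1, by omega, by omega⟩, h2, by omega, psi_eq_one ⟨h1, h2, h3, h4, h5⟩⟩
  · intro x y hx hy hxy1 hxy2
    obtain ⟨hX1, hX2, hX3, hX4, hX5⟩ := psi_cond hx
    obtain ⟨hY1, hY2, hY3, hY4, hY5⟩ := psi_cond hy
    by_cases he : x.1 = y.1
    · refine Prod.ext he ?_
      rw [hX4, hY4, he]
    · have hlt : x.1 < y.1 := lt_of_le_of_ne hxy1 he
      have hxcor : cOf i l (x.1 + 1) < cOf i l x.1 := by
        rcases hX5 with h | h
        · omega
        · exact h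
      have hmono := cOf_anti i l hlen hdec (x.1 + 1) y.1 (by omega) (by omega) hY2
      omega

private lemma phi_psi (n i : ℕ) (hi : 1 ≤ i) (hin : i ≤ n) {l : List ℕ}
    (hl : l ∈ SeqF i (2 * n + 1 - i)) : phi n i (psi i l) = l := by
  obtain ⟨hlen, hdec, hbd⟩ := (mem_SeqF _ _ _).mp hl
  have hgood := good_psi n i hi hin hl
  have hs : ∀ x, psi i l x ≠ 0 → ValidPair n x ∧ x.1 ≤ i ∧ i ≤ x.2 :=
    fun x hx => ⟨(hgood.1 x hx).1, (hgood.1 x hx).2.1, (hgood.1 x hx).2.2.1⟩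
  have key : ∀ a, 1 ≤ a → a ≤ i → recC n i (psi i l) a = cOf i l a := by
    intro a h1 h2
    have hc0 : i - 1 ≤ cOf i l a := by unfold cOf; omega
    apply le_antisymm
    · apply max_le hc0
      apply Finset.sup_le
      intro x hxm
      rw [suppF, Finset.mem_filter] at hxm
      obtain ⟨-, hax, hxs⟩ := hxm
      obtain ⟨h1', h2', h3', h4', h5'⟩ := psi_cond hxs
      rw [h4']
      exact cOf_anti i l hlen hdec a x.1 h1 hax h2'
    · by_cases hca : i ≤ cOf i l a
      · -- find the maximal a* with the same value of cOf
        have hTne : ((Finset.Icc a i).filter fun a' => cOf i l a' = cOf i l a).Nonempty :=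
          ⟨a, by rw [Finset.mem_filter, Finset.mem_Icc]; exact ⟨⟨le_rfl, h2⟩, rfl⟩⟩
        obtain ⟨astar, hastar, hmax⟩ :
            ∃ b, (a ≤ b ∧ b ≤ i ∧ cOf i l b = cOf i l a) ∧
              ∀ c, a ≤ c → c ≤ i → cOf i l c = cOf i l a → c ≤ b := by
          refine ⟨((Finset.Icc a i).filter fun a' => cOf i l a' = cOf i l a).max' hTne,
            ?_, ?_⟩
          · have h := Finset.max'_mem _ hTne
            rw [Finset.mem_filter, Finset.mem_Icc] at h
            exact ⟨h.1.1, h.1.2, h.2⟩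
          · intro c hc1 hc2 hc3
            exact Finset.le_max' _ c
              (by rw [Finset.mem_filter, Finset.mem_Icc]; exact ⟨⟨hc1, hc2⟩, hc3⟩)
        obtain ⟨ha1, ha2, hceq⟩ := hastar
        have hcor : astar = i ∨ cOf i l (astar + 1) < cOf i l astar := by
          by_cases hai : astar = i
          · exact Or.inl hai
          · right
            have h3 : cOf i l (astar + 1) ≤ cOf i l astar :=
              cOf_anti i l hlen hdec astar (astar + 1) (by omega) (by omega) (by omega)
            rcases Nat.eq_or_lt_of_le h3 with heq | hlt
            · exfalso
              have := hmax (astar + 1) (by omega) (by omega) (by omega)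
              omega
            · exact hlt
        have hsx : psi i l (astar, cOf i l a) ≠ 0 := by
          rw [psi_eq_one ⟨show 1 ≤ astar by omega, show astar ≤ i from ha2,
            show i ≤ cOf i l astar by omega,
            show cOf i l a = cOf i l astar from hceq.symm,
            show astar = i ∨ cOf i l (astar + 1) < cOf i l astar from hcor⟩]
          omega
        have hfin := le_recC hs hin hsx (show a ≤ astar from ha1)
        exact hfin
      · have h0 : i - 1 ≤ recC n i (psi i l) a := le_max_left _ _
        omega
  apply List.ext_getElem (by rw [phi_length, hlen])
  intro k h1 h2
  have hki : k < i := by rwa [phi_length] at h1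
  have hD : (phi n i (psi i l)).getD k 0 = l.getD k 0 := by
    rw [phi_getD n i _ hki, key (k + 1) (by omega) (by omega)]
    unfold cOf
    rw [show k + 1 - 1 = k from rfl]
    omega
  rw [List.getD_eq_getElem _ _ h1, List.getD_eq_getElem _ _ h2] at hD
  exact hD

end Stmt8Aux

end SpPBW

namespace SpPBW

/-- `#S(ω_i) = dim V(ω_i) = C(2n, i) - C(2n, i-2)`. -/
theorem stmt8 (n i : ℕ) (hn : 1 ≤ n) (hi : 1 ≤ i) (hin : i ≤ n) :
    {s : ℕ × ℕ → ℕ | InS n (fundWt i) s}.ncard =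
      Nat.choose (2 * n) i - (if 2 ≤ i then Nat.choose (2 * n) (i - 2) else 0) := by
  have hset : {s : ℕ × ℕ → ℕ | InS n (fundWt i) s} = psi i '' ↑(SeqF i (2 * n + 1 - i)) := by
    ext s
    simp only [Set.mem_setOf_eq, Set.mem_image, Finset.mem_coe]
    rw [inS_iff_good n i hi hin]
    constructor
    · intro hg
      exact ⟨phi n i s, phi_mem_SeqF n i hi hin s hg, psi_phi n i hi hin s hg⟩
    · rintro ⟨l, hl, rfl⟩
      exact good_psi n i hi hin hl
  rw [hset, Set.ncard_image_of_injOn (fun l₁ h₁ l₂ h₂ he => by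
      rw [← phi_psi n i hi hin (Finset.mem_coe.mp h₁),
        ← phi_psi n i hi hin (Finset.mem_coe.mp h₂), he]),
    Set.ncard_coe_finset]
  rcases Nat.lt_or_ge i 2 with hi2 | hi2
  · -- i = 1
    obtain rfl : i = 1 := by omega
    rw [if_neg (by omega), card_SeqF_one]
    rw [Nat.choose_one_right]
    omega
  · -- i ≥ 2
    rw [if_pos hi2]
    have hkey := card_SeqF_main (i - 1) (by omega) (2 * n + 1 - i) (by omega)
    rw [show i - 1 + 1 = i by omega, show 2 * n + 1 - i + (i - 1) = 2 * n by omega,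
      show i - 1 - 1 = i - 2 by omega] at hkey
    omega

end SpPBW
end

section
/- Let λ = Σ m_j ω_j be dominant for sp_{2n}, let i be minimal with m_i ≠ 0, and let s ∈ S(λ). Let M_i^s be the set of minimal elements (with respect to the order (2.8)) of {β : (ω_i, β) ≠ 0 and s_β ≠ 0}, and let m_i^s be its indicator vector. Then m_i^s ∈ S(ω_i). -/
open scoped BigOperators TensorProduct

namespace SpPBW


section Aux

lemma dyckStep_le {a b : ℕ × ℕ} (h : DyckStep a b) : a.1 ≤ b.1 ∧ a.2 ≤ b.2 := by
  rcases h with h | h <;> subst h <;> simp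

lemma dyck_nodup {p : List (ℕ × ℕ)} (hc : p.Chain' DyckStep) : p.Nodup := by
  have h1 : (p.map (fun x => x.1 + x.2)).Chain' (· < ·) := by
    show List.IsChain _ _
    rw [List.isChain_map]
    refine hc.imp (fun {a b} h => ?_)
    rcases h with h | h <;> subst h <;> simp
  have h2 : (p.map (fun x => x.1 + x.2)).Pairwise (· < ·) :=
    List.isChain_iff_pairwise.mp h1
  exact List.Nodup.of_map _ (h2.imp Nat.ne_of_lt)

lemma dyck_pairwise {p : List (ℕ × ℕ)} (hc : p.Chain' DyckStep) :
    p.Pairwise (fun a b => a.1 ≤ b.1 ∧ a.2 ≤ b.2) := by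
  haveI : IsTrans (ℕ × ℕ) (fun a b => a.1 ≤ b.1 ∧ a.2 ≤ b.2) :=
    ⟨fun a b c hab hbc => ⟨le_trans hab.1 hbc.1, le_trans hab.2 hbc.2⟩⟩
  have : p.Chain' (fun a b => a.1 ≤ b.1 ∧ a.2 ≤ b.2) :=
    hc.imp (fun {a b} h => dyckStep_le h)
  exact List.isChain_iff_pairwise.mp this

lemma head_rel {α : Type*} {R : α → α → Prop} {p : List α} (hp : p.Pairwise R) {h x : α}
    (hh : p.head? = some h) (hx : x ∈ p) : x = h ∨ R h x := by
  cases p with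
  | nil => simp at hx
  | cons y t =>
    simp only [List.head?_cons, Option.some.injEq] at hh
    subst hh
    rcases List.mem_cons.mp hx with rfl | hx'
    · exact Or.inl rfl
    · exact Or.inr ((List.pairwise_cons.mp hp).1 x hx')

lemma last_rel {α : Type*} {R : α → α → Prop} {p : List α} (hp : p.Pairwise R) {b x : α}
    (hb : p.getLast? = some b) (hx : x ∈ p) : x = b ∨ R x b := by
  induction p with
  | nil => simp at hx
  | cons y t ih =>
    cases t with
    | nil =>
      simp only [List.getLast?_singleton, Option.some.injEq] at hb
      simp only [List.mem_singleton] at hx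
      subst hb; subst hx; exact Or.inl rfl
    | cons z u =>
      have hb' : (z :: u).getLast? = some b := by
        rwa [List.getLast?_cons_cons] at hb
      have hbm : b ∈ z :: u := List.mem_of_getLast? hb'
      rcases List.mem_cons.mp hx with rfl | hx'
      · exact Or.inr ((List.pairwise_cons.mp hp).1 b hbm)
      · exact ih (List.pairwise_cons.mp hp).2 hb' hx'

lemma sum_indicator_le (a : ℕ × ℕ) (f : ℕ × ℕ → ℕ) (hf : ∀ x, f x ≤ 1)
    (hone : ∀ x, f x ≠ 0 → x = a) :
    ∀ l : List (ℕ × ℕ), l.Nodup → (l.map f).sum ≤ 1 := by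
  intro l hl
  induction l with
  | nil => simp
  | cons x t ih =>
    rw [List.nodup_cons] at hl
    simp only [List.map_cons, List.sum_cons]
    by_cases hx : f x = 0
    · rw [hx, Nat.zero_add]; exact ih hl.2
    · have hxa := hone x hx
      subst hxa
      have hz : (t.map f).sum = 0 := by
        apply List.sum_eq_zero
        intro y hy
        obtain ⟨z, hz, rfl⟩ := List.mem_map.mp hy
        by_contra h
        exact hl.1 ((hone z h) ▸ hz)
      rw [hz, Nat.add_zero]; exact hf x

end Aux

/-- Let `λ = Σ m_j ω_j` and let `i` be minimal with `m_i ≠ 0`.  For `s ∈ S(λ)`, the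
indicator vector `m_i^s` of the set of minimal elements of
`R_i^s = {β : (ω_i,β) ≠ 0, s_β ≠ 0}` lies in `S(ω_i)`. -/
theorem stmt10 (n i : ℕ) (hn : 1 ≤ n) (hi : 1 ≤ i) (hin : i ≤ n) (m : ℕ → ℕ)
    (hmi : m i ≠ 0) (hmin : ∀ j, j < i → m j = 0)
    (s : ℕ × ℕ → ℕ) (hs : InS n m s) :
    InS n (fundWt i) (mInd n i s) := by
  classical
  have hf1 : ∀ x, mInd n i s x ≤ 1 := by
    intro x; unfold mInd; split <;> simp
  constructor
  · intro a ha
    unfold mInd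
    rw [if_neg]
    intro hmem
    exact ha hmem.1.1
  · intro p hp
    obtain ⟨hne, hval, ⟨h₁, hhead⟩, hchain, j, hlast⟩ := hp
    by_cases hM : ∃ a ∈ Mis n i s, a ∈ p
    · obtain ⟨a, haM, hap⟩ := hM
      have hsub : ∀ x, mInd n i s x ≠ 0 → x = a := by
        intro x hx
        have hxM : x ∈ Mis n i s := by
          by_contra h
          unfold mInd at hx
          rw [if_neg h] at hx
          exact hx rfl
        have h1 := haM.2 x hxM.1
        have h2 := hxM.2 a haM.1
        unfold rootLt at h1 h2
        push_neg at h1 h2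
        have e1 : x.1 = a.1 := by omega
        have e2 : x.2 = a.2 := by omega
        exact Prod.ext e1 e2
      have hsum : (p.map (mInd n i s)).sum ≤ 1 :=
        sum_indicator_le a _ hf1 hsub p (dyck_nodup hchain)
      have hpw := dyck_pairwise hchain
      have hha : h₁ ≤ a.1 := by
        rcases head_rel hpw hhead hap with rfl | hr
        · exact le_refl _
        · exact hr.1
      have hai : a.1 ≤ i ∧ i ≤ a.2 := ⟨haM.1.2.2.1, haM.1.2.2.2⟩
      have hbound : 1 ≤ pathBound n (fundWt i) p := by
        have key : ∀ b : ℕ × ℕ, p.getLast? = some b →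
            1 ≤ pathBound n (fundWt i) p := by
          intro b hl
          have hab : a.2 ≤ b.2 := by
            rcases last_rel hpw hl hap with rfl | hr
            · exact le_refl _
            · exact hr.2
          unfold pathBound
          rw [hhead, hl]
          simp only
          split
          · rw [show (fundWt i) = (fun l => if l = i then 1 else 0) from rfl]
            rw [Finset.sum_ite_eq' _ i (fun _ => 1)]
            rw [if_pos (Finset.mem_Icc.mpr ⟨by omega, by omega⟩)]
          · rw [show (fundWt i) = (fun l => if l = i then 1 else 0) from rfl]
            rw [Finset.sum_ite_eq' _ i (fun _ => 1)]
            rw [if_pos (Finset.mem_Icc.mpr ⟨by omega, hin⟩)]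
        rcases hlast with hl | hl
        · exact key _ hl
        · exact key _ hl
      exact le_trans hsum hbound
    · push_neg at hM
      have : (p.map (mInd n i s)).sum = 0 := by
        apply List.sum_eq_zero
        intro y hy
        obtain ⟨x, hxp, rfl⟩ := List.mem_map.mp hy
        unfold mInd
        rw [if_neg]
        intro hmem
        exact hM x hmem hxp
      rw [this]
      exact Nat.zero_le _

end SpPBW
end
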